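/- With i^⋆, p^⋆, a^⋆ the stellar welding maps on simplicial cochains: (1) i^⋆ and p^⋆ are cochain maps (d∘i^⋆ = i^⋆∘d and d∘p^⋆ = p^⋆∘d); (2) p^⋆∘i^⋆ = id on C^•(Δ^n); (3) d∘a^⋆ + a^⋆∘d = id − i^⋆∘p^⋆ on C^•(⋆_I Δ^n); (4) a^⋆∘a^⋆ = 0; (5) a^⋆∘i^⋆ = 0; (6) p^⋆∘a^⋆ = 0. In other words, (i^⋆, p^⋆, a^⋆) is a special deformation retraction of C^•(⋆_I Δ^n) onto C^•(Δ^n). -/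

import Mathlib

open scoped BigOperators Classical

noncomputable section

/-- The vertex set `{⋆, 0, …, n}` of the stellar subdivision, with the star
vertex `⋆ = ⊥` ordered first. -/
abbrev VV (n : ℕ) := WithBot (Fin (n + 1))

instance (n : ℕ) : Fintype (VV n) := inferInstanceAs (Fintype (Option (Fin (n + 1))))

/-- (Ambient space of) simplicial chains/cochains: the free ℝ-vector space on
finsets of vertices, realized as functions. -/
abbrev Ch (n : ℕ) := Finset (VV n) → ℝ

/-- The basis chain corresponding to the simplex `σ`. -/
def deltaCh {n : ℕ} (σ : Finset (VV n)) : Ch n := fun τ => if τ = σ then 1 else 0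

/-- Linear extension of a map given on basis simplices. -/
def liftCh {n : ℕ} (f : Finset (VV n) → Ch n) (x : Ch n) : Ch n :=
  fun τ => ∑ σ : Finset (VV n), x σ * f σ τ

/-- Index of the vertex `v` in the increasing enumeration of `σ`. -/
def idxIn {n : ℕ} (σ : Finset (VV n)) (v : VV n) : ℕ :=
  (σ.filter (fun u => u < v)).card

/-- Sign `(-1)^a` where `a` is the index of `v` in `σ`. -/
def sgn {n : ℕ} (σ : Finset (VV n)) (v : VV n) : ℝ := (-1) ^ idxIn σ v

/-- The boundary of a basis simplex: `∂[v_0,…,v_l] = ∑ (-1)^a [v_0,…,v̂_a,…,v_l]`. -/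
def bdryGen {n : ℕ} (σ : Finset (VV n)) : Ch n :=
  ∑ v ∈ σ, sgn σ v • deltaCh (σ.erase v)

/-- A finset of `{0,…,n}` regarded as a finset of vertices. -/
def coeIm {n : ℕ} (I : Finset (Fin (n + 1))) : Finset (VV n) :=
  I.image (fun i => (i : VV n))

/-- Simplices of the stellar subdivision `⋆_I Δ^n`: the nonempty `J ⊆ {0,…,n}`
with `J ⊉ I`, together with `{⋆} ∪ J` for such `J`. -/
def IsSubd {n : ℕ} (I : Finset (Fin (n + 1))) (σ : Finset (VV n)) : Prop :=
  σ.Nonempty ∧ ¬ coeIm I ⊆ σ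

/-- Simplices of `Δ^n`: nonempty subsets of `{0,…,n}`. -/
def IsDel {n : ℕ} (σ : Finset (VV n)) : Prop := σ.Nonempty ∧ ⊥ ∉ σ

/-- Coboundary for the subdivision complex `⋆_I Δ^n`, on dual basis cochains:
`(d τ̂) = ∑_{ρ ⊇ τ simplex of ⋆_I Δ^n} ⟨∂ρ, τ⟩ ρ̂`. -/
def dSubGen {n : ℕ} (I : Finset (Fin (n + 1))) (τ : Finset (VV n)) : Ch n :=
  ∑ v : VV n,
    if v ∉ τ ∧ IsSubd I (insert v τ) then
      sgn (insert v τ) v • deltaCh (insert v τ)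
    else 0

/-- Coboundary for `Δ^n`, on dual basis cochains. -/
def dDelGen {n : ℕ} (τ : Finset (VV n)) : Ch n :=
  ∑ v : VV n,
    if v ∉ τ ∧ v ≠ ⊥ then sgn (insert v τ) v • deltaCh (insert v τ) else 0

/-- The stellar welding inclusion `i^⋆` on cochains (values on dual basis). -/
def istarCo {n : ℕ} (I : Finset (Fin (n + 1))) (σ : Finset (VV n)) : Ch n :=
  (if ¬ coeIm I ⊆ σ then deltaCh σ else 0)
    + (I.card : ℝ)⁻¹ •
        ∑ v ∈ σ ∩ coeIm I, sgn σ v • deltaCh (insert ⊥ (σ.erase v))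

/-- The set `I ∖ J` of elements of `I` not occurring in the simplex `σ`. -/
def missing {n : ℕ} (I : Finset (Fin (n + 1))) (σ : Finset (VV n)) :
    Finset (Fin (n + 1)) :=
  I.filter (fun a : Fin (n + 1) => ((a : VV n) ∉ σ))

/-- The stellar welding projection `p^⋆` on cochains (values on dual basis). -/
def pstarCo {n : ℕ} (I : Finset (Fin (n + 1))) (σ : Finset (VV n)) : Ch n :=
  if ⊥ ∈ σ then
    if h : (missing I σ).card = 1 then
      sgn (σ.erase ⊥) (((missing I σ).min' (Finset.card_pos.mp (by omega)) : Fin (n + 1)) : VV n) •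
        deltaCh (insert
          (((missing I σ).min' (Finset.card_pos.mp (by omega)) : Fin (n + 1)) : VV n)
          (σ.erase ⊥))
    else 0
  else deltaCh σ

/-- The stellar welding homotopy `a^⋆` on cochains (values on dual basis). -/
def astarCo {n : ℕ} (I : Finset (Fin (n + 1))) (σ : Finset (VV n)) : Ch n :=
  if ⊥ ∈ σ then
    - (I.card : ℝ)⁻¹ •
        ∑ v ∈ (σ.erase ⊥) ∩ coeIm I,
          sgn (σ.erase ⊥) v • deltaCh (insert ⊥ ((σ.erase ⊥).erase v))
  else 0


namespace Stellar

variable {n : ℕ}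

/-! ### liftCh basics -/

lemma liftCh_apply (f : Finset (VV n) → Ch n) (x : Ch n) (τ : Finset (VV n)) :
    liftCh f x τ = ∑ σ : Finset (VV n), x σ * f σ τ := rfl

lemma liftCh_delta (f : Finset (VV n) → Ch n) (σ : Finset (VV n)) :
    liftCh f (deltaCh σ) = f σ := by
  funext τ
  simp [liftCh, deltaCh, ite_mul]

lemma liftCh_zero (f : Finset (VV n) → Ch n) : liftCh f (0 : Ch n) = 0 := by
  funext τ; simp [liftCh]

lemma liftCh_add (f : Finset (VV n) → Ch n) (x y : Ch n) :
    liftCh f (x + y) = liftCh f x + liftCh f y := by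
  funext τ
  simp [liftCh, add_mul, Finset.sum_add_distrib]

lemma liftCh_smul (f : Finset (VV n) → Ch n) (c : ℝ) (x : Ch n) :
    liftCh f (c • x) = c • liftCh f x := by
  funext τ
  simp [liftCh, Finset.mul_sum, mul_assoc]

lemma liftCh_neg (f : Finset (VV n) → Ch n) (x : Ch n) :
    liftCh f (-x) = - liftCh f x := by
  funext τ; simp [liftCh]

lemma liftCh_sum (f : Finset (VV n) → Ch n) {α : Type*} (s : Finset α) (g : α → Ch n) :
    liftCh f (∑ i ∈ s, g i) = ∑ i ∈ s, liftCh f (g i) := by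
  funext τ
  simp only [liftCh, Finset.sum_apply, Finset.sum_mul]
  rw [Finset.sum_comm]

lemma liftCh_combo (f : Finset (VV n) → Ch n) {α : Type*} (s : Finset α)
    (c : α → ℝ) (t : α → Finset (VV n)) :
    liftCh f (∑ v ∈ s, c v • deltaCh (t v)) = ∑ v ∈ s, c v • f (t v) := by
  rw [liftCh_sum]
  exact Finset.sum_congr rfl fun v _ => by rw [liftCh_smul, liftCh_delta]

lemma liftCh_ite (f : Finset (VV n) → Ch n) (P : Prop) [Decidable P] (x : Ch n) :
    liftCh f (if P then x else 0) = if P then liftCh f x else 0 := by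
  split <;> simp [liftCh_zero]

/-! ### sgn basics -/

lemma idxIn_insert {σ : Finset (VV n)} {w : VV n} (hw : w ∉ σ) (v : VV n) :
    idxIn (insert w σ) v = idxIn σ v + (if w < v then 1 else 0) := by
  unfold idxIn
  rw [Finset.filter_insert]
  split
  · rw [Finset.card_insert_of_notMem (by simp [hw])]
  · simp

lemma sgn_insert {σ : Finset (VV n)} {w : VV n} (hw : w ∉ σ) (v : VV n) :
    sgn (insert w σ) v = (if w < v then -1 else 1) * sgn σ v := by
  unfold sgn
  rw [idxIn_insert hw, pow_add]
  ring_nf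
  split <;> ring

lemma sgn_erase {σ : Finset (VV n)} {w : VV n} (hw : w ∈ σ) (v : VV n) :
    sgn σ v = (if w < v then -1 else 1) * sgn (σ.erase w) v := by
  conv_lhs => rw [← Finset.insert_erase hw]
  exact sgn_insert (Finset.notMem_erase _ _) v

lemma sgn_sq (σ : Finset (VV n)) (v : VV n) : sgn σ v * sgn σ v = 1 := by
  unfold sgn
  rw [← pow_add, ← two_mul, pow_mul]
  norm_num

lemma sgn_ne_zero (σ : Finset (VV n)) (v : VV n) : sgn σ v ≠ 0 := by
  unfold sgn
  positivity

lemma sgn_bot (σ : Finset (VV n)) : sgn σ (⊥ : VV n) = 1 := by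
  unfold sgn idxIn
  have : σ.filter (fun u => u < (⊥ : VV n)) = ∅ := by
    apply Finset.filter_false_of_mem
    intro x _
    simp
  rw [this]
  simp

lemma sgn_insert_bot {σ : Finset (VV n)} (hb : (⊥ : VV n) ∉ σ) {v : VV n} (hv : v ≠ ⊥) :
    sgn (insert ⊥ σ) v = - sgn σ v := by
  rw [sgn_insert hb v, if_pos (by cases v with | none => exact absurd rfl hv | some a => exact WithBot.bot_lt_coe a)]
  ring

lemma sgn_erase_self (σ : Finset (VV n)) (v : VV n) : sgn (σ.erase v) v = sgn σ v := by
  by_cases hv : v ∈ σ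
  · rw [sgn_erase hv v, if_neg (lt_irrefl v)]
    ring
  · rw [Finset.erase_eq_of_notMem hv]

lemma sgn_antisym {σ : Finset (VV n)} {v w : VV n} (hv : v ∈ σ) (hw : w ∈ σ)
    (hvw : v ≠ w) :
    sgn σ v * sgn (σ.erase v) w = -(sgn σ w * sgn (σ.erase w) v) := by
  have e1 : sgn (σ.erase v) w = (if v < w then -1 else 1) * sgn σ w := by
    rw [sgn_erase hv w]; split <;> ring
  have e2 : sgn (σ.erase w) v = (if w < v then -1 else 1) * sgn σ v := by
    rw [sgn_erase hw v]; split <;> ring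
  rw [e1, e2]
  rcases lt_or_gt_of_ne hvw with h | h
  · rw [if_pos h, if_neg (asymm h)]
    ring
  · rw [if_neg (asymm h), if_pos h]
    ring

/-! ### coeIm and missing -/

lemma mem_coeIm' {I : Finset (Fin (n+1))} {v : VV n} :
    v ∈ coeIm I ↔ ∃ a ∈ I, (a : VV n) = v := by
  simp [coeIm]

lemma bot_not_mem_coeIm (I : Finset (Fin (n+1))) : (⊥ : VV n) ∉ coeIm I := by
  rw [mem_coeIm']
  rintro ⟨a, _, h⟩
  exact WithBot.coe_ne_bot h

lemma mem_coeIm {I : Finset (Fin (n+1))} {a : Fin (n+1)} :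
    ((a : VV n) ∈ coeIm I) ↔ a ∈ I := by
  rw [mem_coeIm']
  constructor
  · rintro ⟨b, hb, h⟩
    rwa [show b = a from by exact_mod_cast h] at hb
  · exact fun h => ⟨a, h, rfl⟩

lemma mem_coeIm_ne_bot {I : Finset (Fin (n+1))} {v : VV n} (h : v ∈ coeIm I) :
    v ≠ ⊥ := by
  rcases mem_coeIm'.mp h with ⟨a, _, rfl⟩
  exact WithBot.coe_ne_bot

lemma card_coeIm (I : Finset (Fin (n+1))) : (coeIm (n:=n) I).card = I.card := by
  rw [show coeIm (n:=n) I = I.image (fun i => ((i:Fin (n+1)) : VV n)) from by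
    apply Finset.ext; intro v; rw [mem_coeIm', Finset.mem_image]]
  exact Finset.card_image_of_injective _ (fun a b h => by exact_mod_cast h)

lemma coeIm_subset_insert_bot {I : Finset (Fin (n+1))} {σ : Finset (VV n)} :
    coeIm I ⊆ insert ⊥ σ ↔ coeIm I ⊆ σ := by
  constructor
  · intro h v hv
    rcases Finset.mem_insert.mp (h hv) with h1 | h1
    · exact absurd h1 (mem_coeIm_ne_bot hv)
    · exact h1
  · intro h
    exact h.trans (Finset.subset_insert _ _)

lemma mem_missing {I : Finset (Fin (n+1))} {σ : Finset (VV n)} {a : Fin (n+1)} :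
    a ∈ missing I σ ↔ a ∈ I ∧ (a : VV n) ∉ σ := by
  unfold missing
  rw [Finset.mem_filter]

lemma missing_eq_empty_iff {I : Finset (Fin (n+1))} {σ : Finset (VV n)} :
    missing I σ = ∅ ↔ coeIm I ⊆ σ := by
  constructor
  · intro h v hv
    rcases mem_coeIm'.mp hv with ⟨a, ha, rfl⟩
    by_contra hns
    exact Finset.notMem_empty a (h ▸ mem_missing.mpr ⟨ha, hns⟩)
  · intro h
    apply Finset.eq_empty_of_forall_notMem
    intro a ha
    rcases mem_missing.mp ha with ⟨ha1, ha2⟩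
    exact ha2 (h (mem_coeIm.mpr ha1))

lemma missing_nonempty {I : Finset (Fin (n+1))} {σ : Finset (VV n)}
    (h : ¬ coeIm I ⊆ σ) : (missing I σ).Nonempty := by
  rw [Finset.nonempty_iff_ne_empty]
  intro he
  exact h (missing_eq_empty_iff.mp he)

lemma missing_insert_bot (I : Finset (Fin (n+1))) (σ : Finset (VV n)) :
    missing I (insert ⊥ σ) = missing I σ := by
  apply Finset.ext
  intro a
  simp only [mem_missing, Finset.mem_insert]
  constructor
  · rintro ⟨h1, h2⟩; exact ⟨h1, fun hc => h2 (Or.inr hc)⟩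
  · rintro ⟨h1, h2⟩
    refine ⟨h1, ?_⟩
    rintro (hc | hc)
    · exact WithBot.coe_ne_bot hc
    · exact h2 hc

/-! ### antisymmetric double sums -/

lemma sum_antisym {α : Type*} [DecidableEq α] (A : Finset α) (F : α → α → Ch n)
    (h : ∀ v ∈ A, ∀ w ∈ A.erase v, F v w = - F w v) :
    ∑ v ∈ A, ∑ w ∈ A.erase v, F v w = 0 := by
  set S := ∑ v ∈ A, ∑ w ∈ A.erase v, F v w with hS
  have hswap : S = ∑ w ∈ A, ∑ v ∈ A.erase w, F v w := by
    rw [hS]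
    apply Finset.sum_comm'
    intro v w
    simp only [Finset.mem_erase]
    tauto
  have hneg : S = -S := by
    nth_rewrite 1 [hswap]
    rw [hS, ← Finset.sum_neg_distrib]
    apply Finset.sum_congr rfl
    intro w hw
    rw [← Finset.sum_neg_distrib]
    apply Finset.sum_congr rfl
    intro v hv
    rw [h w hw v hv, neg_neg]
  have h2 : (2:ℝ) • S = 0 := by
    rw [two_smul]
    nth_rewrite 1 [hneg]
    simp
  calc S = (2:ℝ)⁻¹ • ((2:ℝ) • S) := by rw [smul_smul]; norm_num
  _ = 0 := by rw [h2, smul_zero]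

/-! ### expansions of the maps under liftCh -/

variable {I : Finset (Fin (n+1))}

lemma liftCh_istar (f : Finset (VV n) → Ch n) (σ : Finset (VV n)) :
    liftCh f (istarCo I σ) =
      (if ¬ coeIm I ⊆ σ then f σ else 0)
        + (I.card : ℝ)⁻¹ • ∑ v ∈ σ ∩ coeIm I, sgn σ v • f (insert ⊥ (σ.erase v)) := by
  unfold istarCo
  rw [liftCh_add, liftCh_ite, liftCh_delta, liftCh_smul, liftCh_combo]

lemma astar_of_bot {σ : Finset (VV n)} (hb : (⊥ : VV n) ∈ σ) :
    astarCo I σ = - (I.card : ℝ)⁻¹ •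
        ∑ v ∈ (σ.erase ⊥) ∩ coeIm I,
          sgn (σ.erase ⊥) v • deltaCh (insert ⊥ ((σ.erase ⊥).erase v)) := by
  unfold astarCo
  rw [if_pos hb]

lemma astar_of_not_bot {σ : Finset (VV n)} (hb : (⊥ : VV n) ∉ σ) :
    astarCo I σ = 0 := by
  unfold astarCo
  rw [if_neg hb]

lemma liftCh_astar (f : Finset (VV n) → Ch n) {σ : Finset (VV n)} (hb : (⊥ : VV n) ∈ σ) :
    liftCh f (astarCo I σ) = - (I.card : ℝ)⁻¹ •
        ∑ v ∈ (σ.erase ⊥) ∩ coeIm I,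
          sgn (σ.erase ⊥) v • f (insert ⊥ ((σ.erase ⊥).erase v)) := by
  rw [astar_of_bot hb, liftCh_smul, liftCh_combo]

lemma pstar_of_not_bot {σ : Finset (VV n)} (hb : (⊥ : VV n) ∉ σ) :
    pstarCo I σ = deltaCh σ := by
  unfold pstarCo
  rw [if_neg hb]

lemma pstar_of_card_ne {σ : Finset (VV n)} (hb : (⊥ : VV n) ∈ σ)
    (h : (missing I σ).card ≠ 1) : pstarCo I σ = 0 := by
  unfold pstarCo
  rw [if_pos hb, dif_neg h]

lemma pstar_of_card_one {σ : Finset (VV n)} (hb : (⊥ : VV n) ∈ σ)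
    (h : (missing I σ).card = 1) :
    pstarCo I σ =
      sgn (σ.erase ⊥) (((missing I σ).min' (Finset.card_pos.mp (by omega)) : Fin (n + 1)) : VV n) •
        deltaCh (insert
          (((missing I σ).min' (Finset.card_pos.mp (by omega)) : Fin (n + 1)) : VV n)
          (σ.erase ⊥)) := by
  unfold pstarCo
  rw [if_pos hb, dif_pos h]

lemma liftCh_dSub (f : Finset (VV n) → Ch n) (τ : Finset (VV n)) :
    liftCh f (dSubGen I τ) =
      ∑ v : VV n,
        if v ∉ τ ∧ IsSubd I (insert v τ) then
          sgn (insert v τ) v • f (insert v τ)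
        else 0 := by
  unfold dSubGen
  rw [liftCh_sum]
  refine Finset.sum_congr rfl fun v _ => ?_
  rw [liftCh_ite, liftCh_smul, liftCh_delta]

lemma liftCh_dDel (f : Finset (VV n) → Ch n) (τ : Finset (VV n)) :
    liftCh f (dDelGen τ) =
      ∑ v : VV n,
        if v ∉ τ ∧ v ≠ ⊥ then sgn (insert v τ) v • f (insert v τ) else 0 := by
  unfold dDelGen
  rw [liftCh_sum]
  refine Finset.sum_congr rfl fun v _ => ?_
  rw [liftCh_ite, liftCh_smul, liftCh_delta]

/-! ### statements (4),(5),(6),(2) -/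

lemma key_aa (T : Finset (VV n)) (hbT : (⊥ : VV n) ∉ T) :
    ∑ v ∈ T ∩ coeIm I, sgn T v • astarCo I (insert ⊥ (T.erase v)) = 0 := by
  have hstep : ∀ v ∈ T ∩ coeIm I,
      sgn T v • astarCo I (insert ⊥ (T.erase v)) =
        - (I.card : ℝ)⁻¹ •
          ∑ w ∈ (T ∩ coeIm I).erase v,
            (sgn T v * sgn (T.erase v) w) •
              deltaCh (insert ⊥ (((T.erase v)).erase w)) := by
    intro v hv
    have hb' : (⊥ : VV n) ∉ T.erase v := fun h => hbT (Finset.mem_of_mem_erase h)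
    rw [astar_of_bot (Finset.mem_insert_self _ _), Finset.erase_insert hb',
      Finset.erase_inter, smul_comm, Finset.smul_sum]
    congr 1
    refine Finset.sum_congr rfl fun w _ => ?_
    rw [smul_smul]
  rw [Finset.sum_congr rfl hstep, ← Finset.smul_sum]
  rw [sum_antisym, smul_zero]
  intro v hv w hw
  have hvT : v ∈ T := (Finset.mem_inter.mp hv).1
  have hwT : w ∈ T := (Finset.mem_inter.mp (Finset.mem_of_mem_erase hw)).1
  have hne : w ≠ v := (Finset.mem_erase.mp hw).1
  rw [Finset.erase_right_comm, sgn_antisym hvT hwT (Ne.symm hne), neg_smul]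

lemma stmt4 (σ : Finset (VV n)) (hσ : IsSubd I σ) :
    liftCh (astarCo I) (astarCo I σ) = 0 := by
  by_cases hb : (⊥ : VV n) ∈ σ
  · rw [liftCh_astar _ hb, key_aa _ (Finset.notMem_erase _ _), smul_zero]
  · rw [astar_of_not_bot hb, liftCh_zero]

lemma stmt5 (σ : Finset (VV n)) (hσ : IsDel σ) :
    liftCh (astarCo I) (istarCo I σ) = 0 := by
  rw [liftCh_istar, key_aa _ hσ.2, smul_zero, add_zero, astar_of_not_bot hσ.2, ite_self]

lemma missing_two {σ : Finset (VV n)} (hns : ¬ coeIm I ⊆ σ) {v : VV n}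
    (hv : v ∈ σ ∩ coeIm I) : (missing I (σ.erase v)).card ≠ 1 := by
  rcases Finset.mem_inter.mp hv with ⟨hvσ, hvI⟩
  rcases mem_coeIm'.mp hvI with ⟨a, haI, rfl⟩
  rcases missing_nonempty hns with ⟨m, hm⟩
  rcases mem_missing.mp hm with ⟨hmI, hmσ⟩
  have h2 : 1 < (missing I (σ.erase ((a : VV n)))).card := by
    rw [Finset.one_lt_card]
    refine ⟨a, mem_missing.mpr ⟨haI, Finset.notMem_erase _ _⟩,
      m, mem_missing.mpr ⟨hmI, fun hc => hmσ (Finset.mem_of_mem_erase hc)⟩, ?_⟩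
    intro hc
    exact hmσ (by rwa [hc] at hvσ)
  omega

lemma stmt6 (σ : Finset (VV n)) (hσ : IsSubd I σ) :
    liftCh (pstarCo I) (astarCo I σ) = 0 := by
  by_cases hb : (⊥ : VV n) ∈ σ
  · rw [liftCh_astar _ hb]
    have hns : ¬ coeIm I ⊆ σ.erase ⊥ := fun hc => hσ.2 (hc.trans (Finset.erase_subset _ _))
    have : ∀ v ∈ (σ.erase ⊥) ∩ coeIm I,
        sgn (σ.erase ⊥) v • pstarCo I (insert ⊥ ((σ.erase ⊥).erase v)) = 0 := by
      intro v hv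
      rw [pstar_of_card_ne (Finset.mem_insert_self _ _), smul_zero]
      rw [missing_insert_bot]
      exact missing_two hns hv
    rw [Finset.sum_congr rfl this, Finset.sum_const_zero, smul_zero]
  · rw [astar_of_not_bot hb, liftCh_zero]

lemma stmt2 (hI : I.Nonempty) (σ : Finset (VV n)) (hσ : IsDel σ) :
    liftCh (pstarCo I) (istarCo I σ) = deltaCh σ := by
  rw [liftCh_istar, pstar_of_not_bot hσ.2]
  by_cases hc : coeIm I ⊆ σ
  · rw [if_neg (by exact fun h => h hc), zero_add]
    have hstep : ∀ v ∈ σ ∩ coeIm I,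
        sgn σ v • pstarCo I (insert ⊥ (σ.erase v)) = deltaCh σ := by
      intro v hv
      rcases Finset.mem_inter.mp hv with ⟨hvσ, hvI⟩
      rcases mem_coeIm'.mp hvI with ⟨a, haI, rfl⟩
      have hmiss : missing I ((insert ⊥ (σ.erase ((a : VV n))))) = {a} := by
        rw [missing_insert_bot]
        apply Finset.ext
        intro b
        rw [mem_missing, Finset.mem_singleton]
        constructor
        · rintro ⟨hbI, hbe⟩
          by_contra hba
          exact hbe (Finset.mem_erase.mpr ⟨by exact_mod_cast hba, hc (mem_coeIm.mpr hbI)⟩)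
        · rintro rfl
          exact ⟨haI, Finset.notMem_erase _ _⟩
      have hb1 : (missing I (insert ⊥ (σ.erase ((a : VV n))))).card = 1 := by
        rw [hmiss]; rfl
      rw [pstar_of_card_one (Finset.mem_insert_self _ _) hb1]
      have hbσ : (⊥ : VV n) ∉ σ.erase ((a : VV n)) :=
        fun h => hσ.2 (Finset.mem_of_mem_erase h)
      have hmin : ((missing I (insert ⊥ (σ.erase ((a : VV n))))).min'
          (Finset.card_pos.mp (by omega))) = a := by
        simp [hmiss]
      rw [Finset.erase_insert hbσ]
      rw [hmin]
      rw [Finset.insert_erase hvσ, smul_smul, sgn_erase_self, sgn_sq, one_smul]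
    rw [Finset.sum_congr rfl hstep, Finset.sum_const]
    have hcard : (σ ∩ coeIm I).card = I.card := by
      rw [Finset.inter_eq_right.mpr hc, card_coeIm]
    rw [hcard]
    have hk : (I.card : ℝ) ≠ 0 := by
      have := Finset.card_pos.mpr hI
      positivity
    rw [← Nat.cast_smul_eq_nsmul ℝ, smul_smul, inv_mul_cancel₀ hk, one_smul]
  · rw [if_pos hc]
    have hstep : ∀ v ∈ σ ∩ coeIm I,
        sgn σ v • pstarCo I (insert ⊥ (σ.erase v)) = 0 := by
      intro v hv
      rw [pstar_of_card_ne (Finset.mem_insert_self _ _), smul_zero]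
      rw [missing_insert_bot]
      exact missing_two hc hv
    rw [Finset.sum_congr rfl hstep, Finset.sum_const_zero, smul_zero, add_zero]

/-! ### helpers for the cochain-map identities -/

lemma ite_out {α : Type*} [AddCommMonoid α] {P : Prop} [Decidable P]
    {β : Type*} (s : Finset β) (f : β → α) :
    ∑ v ∈ s, (if P then f v else 0) = if P then ∑ v ∈ s, f v else 0 := by
  split
  · rfl
  · exact Finset.sum_const_zero

lemma set_d {S : Finset (VV n)} (hbS : (⊥ : VV n) ∉ S) {v w : VV n}
    (hvw : v ≠ w) :
    insert w (insert ⊥ (S.erase v)) = insert ⊥ ((insert w S).erase v) := by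
  ext x
  simp only [Finset.mem_insert, Finset.mem_erase]
  constructor
  · rintro (rfl | rfl | ⟨hxv, hxS⟩)
    · exact Or.inr ⟨fun h => hvw h.symm, Or.inl rfl⟩
    · exact Or.inl rfl
    · exact Or.inr ⟨hxv, Or.inr hxS⟩
  · rintro (rfl | ⟨hxv, (rfl | hxS)⟩)
    · exact Or.inr (Or.inl rfl)
    · exact Or.inl rfl
    · exact Or.inr (Or.inr ⟨hxv, hxS⟩)

lemma set_e {S : Finset (VV n)} {v : VV n} (hv : v ∈ S) :
    insert v (insert ⊥ (S.erase v)) = insert ⊥ S := by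
  rw [Finset.insert_comm, Finset.insert_erase hv]

lemma sgn_key {S : Finset (VV n)} (hbS : (⊥ : VV n) ∉ S) {v w : VV n}
    (hv : v ∈ S) (hw : w ∉ S) (hwb : w ≠ ⊥) (hvw : v ≠ w) :
    sgn S v * sgn (insert w (insert ⊥ (S.erase v))) w
      = sgn (insert w S) w * sgn (insert w S) v := by
  have hbe : (⊥ : VV n) ∉ S.erase v := fun h => hbS (Finset.mem_of_mem_erase h)
  have hbwe : (⊥ : VV n) ∉ insert w (S.erase v) := by
    simp only [Finset.mem_insert]
    rintro (h | h)
    · exact hwb h.symm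
    · exact hbe h
  have hwe : w ∉ S.erase v := fun h => hw (Finset.mem_of_mem_erase h)
  rw [Finset.insert_comm, sgn_insert_bot hbwe hwb, sgn_insert hwe w,
    if_neg (lt_irrefl w), one_mul, sgn_insert hw w, if_neg (lt_irrefl w), one_mul,
    sgn_insert hw v]
  have he : sgn (S.erase v) w = (if v < w then -1 else 1) * sgn S w := by
    rw [sgn_erase hv w]; split <;> ring
  rw [he]
  rcases lt_or_gt_of_ne hvw with h | h
  · rw [if_pos h, if_neg (asymm h)]; ring
  · rw [if_neg (asymm h), if_pos h]; ring

lemma subd_insert_iff {I : Finset (Fin (n+1))} (w : VV n) (τ : Finset (VV n)) :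
    IsSubd I (insert w τ) ↔ ¬ coeIm I ⊆ insert w τ := by
  unfold IsSubd
  exact and_iff_right (Finset.insert_nonempty _ _)

lemma sgn_diag {S : Finset (VV n)} (hbS : (⊥ : VV n) ∉ S) {v : VV n} (hv : v ∈ S) :
    sgn (insert v (insert ⊥ (S.erase v))) v = - sgn S v := by
  rw [set_e hv, sgn_insert_bot hbS (fun h => hbS (h ▸ hv))]

lemma card_diag {I : Finset (Fin (n+1))} (S : Finset (VV n)) :
    (Finset.univ.filter (fun w : VV n => w ∉ S ∧ w ≠ ⊥ ∧ w ∈ coeIm I)).card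
      = (coeIm I \ S).card := by
  congr 1
  ext w
  simp only [Finset.mem_filter, Finset.mem_univ, true_and, Finset.mem_sdiff]
  constructor
  · rintro ⟨h1, _, h3⟩; exact ⟨h3, h1⟩
  · rintro ⟨h1, h2⟩; exact ⟨h2, mem_coeIm_ne_bot h1, h1⟩

-- appended to infra before `end Stellar`
lemma stmt1a (hI : I.Nonempty) (σ : Finset (VV n)) (hσ : IsDel σ) :
    liftCh (dSubGen I) (istarCo I σ) = liftCh (istarCo I) (dDelGen σ) := by
  obtain ⟨hne, hb⟩ := hσ
  have hk : (I.card : ℝ) ≠ 0 := by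
    have := Finset.card_pos.mpr hI
    positivity
  set c : ℝ := (I.card : ℝ)⁻¹ with hc
  set A := σ ∩ coeIm I with hA
  set Flat : Ch n := ∑ w : VV n,
      if w ∉ σ ∧ w ≠ ⊥ ∧ ¬ coeIm I ⊆ insert w σ then
        sgn (insert w σ) w • deltaCh (insert w σ) else 0 with hFlat
  set Diag : Ch n := ∑ w : VV n,
      if w ∉ σ ∧ w ≠ ⊥ ∧ w ∈ coeIm I then deltaCh (insert ⊥ σ) else 0 with hDiag
  set Cross : Ch n := ∑ w : VV n,
      if w ∉ σ ∧ w ≠ ⊥ then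
        ∑ v ∈ A, (sgn (insert w σ) w * sgn (insert w σ) v) •
          deltaCh (insert ⊥ ((insert w σ).erase v))
      else 0 with hCross
  have hRHS : liftCh (istarCo I) (dDelGen σ) = Flat + c • Diag + c • Cross := by
    rw [liftCh_dDel]
    have point : ∀ w : VV n, w ∉ σ → w ≠ ⊥ →
        sgn (insert w σ) w • istarCo I (insert w σ)
          = (if ¬ coeIm I ⊆ insert w σ then sgn (insert w σ) w • deltaCh (insert w σ) else 0)
            + c • (if w ∈ coeIm I then deltaCh (insert ⊥ σ) else 0)
            + c • ∑ v ∈ A, (sgn (insert w σ) w * sgn (insert w σ) v) •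
                deltaCh (insert ⊥ ((insert w σ).erase v)) := by
      intro w hw1 hw2
      unfold istarCo
      rw [smul_add, add_assoc]
      congr 1
      · by_cases h : coeIm I ⊆ insert w σ
        · rw [if_neg (not_not_intro h), if_neg (not_not_intro h), smul_zero]
        · rw [if_pos h, if_pos h]
      · rw [smul_comm, ← smul_add]
        congr 1
        by_cases hwI : w ∈ coeIm I
        · have hwA : w ∉ A := fun h => hw1 (Finset.mem_inter.mp h).1
          rw [Finset.insert_inter_of_mem hwI, Finset.sum_insert hwA, smul_add, if_pos hwI]
          congr 1
          · rw [Finset.erase_insert hw1, smul_smul, sgn_sq, one_smul]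
          · rw [Finset.smul_sum]
            exact Finset.sum_congr rfl fun v _ => smul_smul _ _ _
        · rw [Finset.insert_inter_of_notMem hwI, if_neg hwI, zero_add, Finset.smul_sum]
          exact Finset.sum_congr rfl fun v _ => smul_smul _ _ _
    have expand : ∀ w : VV n,
        (if w ∉ σ ∧ w ≠ ⊥ then sgn (insert w σ) w • istarCo I (insert w σ) else 0)
          = (if w ∉ σ ∧ w ≠ ⊥ ∧ ¬ coeIm I ⊆ insert w σ then
              sgn (insert w σ) w • deltaCh (insert w σ) else 0)
            + c • (if w ∉ σ ∧ w ≠ ⊥ ∧ w ∈ coeIm I then deltaCh (insert ⊥ σ) else 0)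
            + c • (if w ∉ σ ∧ w ≠ ⊥ then
                ∑ v ∈ A, (sgn (insert w σ) w * sgn (insert w σ) v) •
                  deltaCh (insert ⊥ ((insert w σ).erase v)) else 0) := by
      intro w
      by_cases hw : w ∉ σ ∧ w ≠ ⊥
      · have h1 : (w ∉ σ ∧ w ≠ ⊥ ∧ ¬ coeIm I ⊆ insert w σ) ↔ (¬ coeIm I ⊆ insert w σ) := by
          tauto
        have h2 : (w ∉ σ ∧ w ≠ ⊥ ∧ w ∈ coeIm I) ↔ (w ∈ coeIm I) := by tauto
        rw [if_pos hw, point w hw.1 hw.2, if_congr h1 rfl rfl, if_congr h2 rfl rfl, if_pos hw]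
      · rw [if_neg hw, if_neg (by tauto), if_neg (by tauto), if_neg hw]
        simp
    rw [Finset.sum_congr rfl (fun w _ => expand w), Finset.sum_add_distrib,
      Finset.sum_add_distrib, ← Finset.smul_sum, ← Finset.smul_sum]
  have hLHS : liftCh (dSubGen I) (istarCo I σ) = Flat + c • Diag + c • Cross := by
    rw [liftCh_istar]
    have claim1 : (if ¬ coeIm I ⊆ σ then dSubGen I σ else 0)
        = Flat + (if ¬ coeIm I ⊆ σ then deltaCh (insert ⊥ σ) else 0) := by
      by_cases hcs : coeIm I ⊆ σ
      · rw [if_neg (not_not_intro hcs), if_neg (not_not_intro hcs), add_zero, hFlat]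
        symm
        apply Finset.sum_eq_zero
        intro w _
        rw [if_neg]
        rintro ⟨_, _, h3⟩
        exact h3 (hcs.trans (Finset.subset_insert _ _))
      · rw [if_pos hcs, if_pos hcs]
        unfold dSubGen
        have point : ∀ w : VV n,
            (if w ∉ σ ∧ IsSubd I (insert w σ) then
              sgn (insert w σ) w • deltaCh (insert w σ) else 0)
            = (if w ∉ σ ∧ w ≠ ⊥ ∧ ¬ coeIm I ⊆ insert w σ then
                sgn (insert w σ) w • deltaCh (insert w σ) else 0)
              + (if w = ⊥ then deltaCh (insert ⊥ σ) else 0) := by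
          intro w
          by_cases hwb : w = ⊥
          · subst hwb
            have hpos : (⊥ : VV n) ∉ σ ∧ IsSubd I (insert ⊥ σ) :=
              ⟨hb, (subd_insert_iff _ _).mpr (fun h => hcs (coeIm_subset_insert_bot.mp h))⟩
            have hno : ¬((⊥ : VV n) ∉ σ ∧ (⊥ : VV n) ≠ ⊥ ∧ ¬ coeIm I ⊆ insert (⊥ : VV n) σ) :=
              fun h => h.2.1 rfl
            rw [if_pos hpos, if_neg hno, zero_add, if_pos rfl, sgn_bot, one_smul]
          · have hiff : (w ∉ σ ∧ IsSubd I (insert w σ))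
                ↔ (w ∉ σ ∧ w ≠ ⊥ ∧ ¬ coeIm I ⊆ insert w σ) := by
              rw [subd_insert_iff]
              tauto
            rw [if_neg hwb, add_zero, if_congr hiff rfl rfl]
        rw [Finset.sum_congr rfl (fun w _ => point w), Finset.sum_add_distrib]
        congr 1
        rw [Finset.sum_ite_eq' Finset.univ (⊥ : VV n) (fun _ => deltaCh (insert ⊥ σ)),
          if_pos (Finset.mem_univ _)]
    have claim2 : ∑ v ∈ A, sgn σ v • dSubGen I (insert ⊥ (σ.erase v))
        = Cross + (A.card) • (if ¬ coeIm I ⊆ σ then -deltaCh (insert ⊥ σ) else 0) := by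
      have pointv : ∀ v ∈ A, sgn σ v • dSubGen I (insert ⊥ (σ.erase v))
          = (∑ w : VV n, if w ∉ σ ∧ w ≠ ⊥ then
                (sgn (insert w σ) w * sgn (insert w σ) v) •
                  deltaCh (insert ⊥ ((insert w σ).erase v)) else 0)
            + (if ¬ coeIm I ⊆ σ then -deltaCh (insert ⊥ σ) else 0) := by
        intro v hv
        obtain ⟨hvσ, hvI⟩ := Finset.mem_inter.mp hv
        have hvb : v ≠ ⊥ := mem_coeIm_ne_bot hvI
        unfold dSubGen
        rw [Finset.smul_sum]
        have pw : ∀ w : VV n,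
            sgn σ v • (if w ∉ insert ⊥ (σ.erase v) ∧ IsSubd I (insert w (insert ⊥ (σ.erase v))) then
                sgn (insert w (insert ⊥ (σ.erase v))) w • deltaCh (insert w (insert ⊥ (σ.erase v)))
              else 0)
            = (if w ∉ σ ∧ w ≠ ⊥ then
                (sgn (insert w σ) w * sgn (insert w σ) v) •
                  deltaCh (insert ⊥ ((insert w σ).erase v)) else 0)
              + (if w = v then (if ¬ coeIm I ⊆ σ then -deltaCh (insert ⊥ σ) else 0) else 0) := by
          intro w
          by_cases hwb : w = ⊥
          · subst hwb
            rw [if_neg (by simp), smul_zero, if_neg (by tauto), if_neg (fun h => hvb h.symm),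
              add_zero]
          by_cases hwv : w = v
          · subst hwv
            have hn1 : ¬(w ∉ σ ∧ w ≠ ⊥) := fun h => h.1 hvσ
            rw [if_neg hn1, zero_add, if_pos rfl]
            by_cases hcs : coeIm I ⊆ σ
            · rw [if_neg (not_not_intro hcs), if_neg, smul_zero]
              rintro ⟨_, hsub⟩
              have := hsub.2
              rw [set_e hvσ] at this
              exact this (coeIm_subset_insert_bot.mpr hcs)
            · rw [if_pos hcs, if_pos]
              · rw [smul_smul]
                have h1 : sgn (insert w (insert ⊥ (σ.erase w))) w = - sgn σ w :=
                  sgn_diag hb hvσ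
                rw [h1, mul_neg, sgn_sq, set_e hvσ, neg_one_smul]
              · refine ⟨?_, ?_⟩
                · simp only [Finset.mem_insert, not_or]
                  exact ⟨hwb, Finset.notMem_erase _ _⟩
                · rw [subd_insert_iff, set_e hvσ]
                  exact fun h => hcs (coeIm_subset_insert_bot.mp h)
          · rw [if_neg hwv, add_zero]
            by_cases hwσ : w ∈ σ
            · have hn1 : ¬(w ∉ σ ∧ w ≠ ⊥) := fun h => h.1 hwσ
              have hn2 : ¬(w ∉ insert ⊥ (σ.erase v)
                  ∧ IsSubd I (insert w (insert ⊥ (σ.erase v)))) :=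
                fun h => h.1 (Finset.mem_insert_of_mem (Finset.mem_erase.mpr ⟨hwv, hwσ⟩))
              rw [if_neg hn2, if_neg hn1, smul_zero]
            · have hvw : v ≠ w := fun h => hwv h.symm
              rw [if_pos, if_pos ⟨hwσ, hwb⟩, smul_smul, sgn_key hb hvσ hwσ hwb hvw,
                set_d hb hvw]
              refine ⟨?_, ?_⟩
              · simp only [Finset.mem_insert, not_or]
                exact ⟨hwb, fun h => hwσ (Finset.mem_of_mem_erase h)⟩
              · rw [subd_insert_iff]
                intro hsub
                have hvmem := hsub hvI
                simp only [Finset.mem_insert] at hvmem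
                rcases hvmem with h | h | h
                · exact hvw h
                · exact hvb h
                · exact (Finset.notMem_erase v σ) h
        rw [Finset.sum_congr rfl (fun w _ => pw w), Finset.sum_add_distrib]
        congr 1
        have : ∀ w : VV n, (if w = v then (if ¬ coeIm I ⊆ σ then -deltaCh (insert ⊥ σ) else 0) else 0)
            = if w = v then (fun _ : VV n => (if ¬ coeIm I ⊆ σ then -deltaCh (insert ⊥ σ) else 0)) w else 0 :=
          fun w => rfl
        rw [Finset.sum_congr rfl (fun w _ => this w),
          Finset.sum_ite_eq' Finset.univ v _, if_pos (Finset.mem_univ _)]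
      rw [Finset.sum_congr rfl pointv, Finset.sum_add_distrib]
      congr 1
      · rw [Finset.sum_comm]
        rw [hCross]
        refine Finset.sum_congr rfl fun w _ => ?_
        rw [ite_out]
      · rw [Finset.sum_const]
    have key : (if ¬ coeIm I ⊆ σ then deltaCh (insert ⊥ σ) else 0)
        + c • ((A.card) • (if ¬ coeIm I ⊆ σ then -deltaCh (insert ⊥ σ) else 0)) = c • Diag := by
      have hDiagCard : Diag = ((coeIm I \ σ).card) • deltaCh (insert ⊥ σ) := by
        rw [hDiag, ← Finset.sum_filter, Finset.sum_const, card_diag]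
      by_cases hcs : coeIm I ⊆ σ
      · rw [if_neg (not_not_intro hcs), if_neg (not_not_intro hcs), hDiagCard,
          Finset.sdiff_eq_empty_iff_subset.mpr hcs]
        simp
      · rw [if_pos hcs, if_pos hcs, hDiagCard]
        rw [← Nat.cast_smul_eq_nsmul ℝ (A.card), ← Nat.cast_smul_eq_nsmul ℝ ((coeIm I \ σ).card),
          smul_smul, smul_smul, smul_neg, ← neg_smul]
        nth_rewrite 1 [← one_smul ℝ (deltaCh (insert ⊥ σ))]
        rw [← add_smul]
        congr 1
        have hsum : ((coeIm I ∩ σ).card : ℝ) + ((coeIm I \ σ).card : ℝ) = (I.card : ℝ) := by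
          have := Finset.card_inter_add_card_sdiff (coeIm I) σ
          rw [← card_coeIm (n := n) I]
          exact_mod_cast this
        have hAcard : (A.card : ℝ) = ((coeIm I ∩ σ).card : ℝ) := by
          rw [hA, Finset.inter_comm]
        rw [hc]
        rw [hAcard] at *
        field_simp
        linarith
    rw [claim1, claim2, smul_add, ← key]
    abel
  rw [hLHS, hRHS]

lemma coe_of_ne_bot {w : VV n} (h : w ≠ ⊥) : ∃ b : Fin (n+1), w = (b : VV n) := by
  cases w with
  | none => exact absurd rfl h
  | some b => exact ⟨b, rfl⟩

lemma missing_insert_coe {I : Finset (Fin (n+1))} (b : Fin (n+1)) (τ : Finset (VV n)) :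
    missing I (insert (b : VV n) τ) = (missing I τ).erase b := by
  ext x
  simp only [mem_missing, Finset.mem_erase, Finset.mem_insert]
  constructor
  · rintro ⟨h1, h2⟩
    refine ⟨fun hxb => h2 (Or.inl (by rw [hxb])), h1, fun hc => h2 (Or.inr hc)⟩
  · rintro ⟨h1, h2, h3⟩
    refine ⟨h2, ?_⟩
    rintro (hc | hc)
    · exact h1 (by exact_mod_cast hc)
    · exact h3 hc

lemma erase_bot_insert {T : Finset (VV n)} (hbT : (⊥ : VV n) ∉ T) {w : VV n}
    (hwb : w ≠ ⊥) : (insert w (insert ⊥ T)).erase ⊥ = insert w T := by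
  rw [Finset.insert_comm, Finset.erase_insert]
  simp only [Finset.mem_insert, not_or]
  exact ⟨fun h => hwb h.symm, hbT⟩

lemma sgn_key2 {T : Finset (VV n)} (hbT : (⊥ : VV n) ∉ T) {m w : VV n}
    (hm : m ∉ T) (hw : w ∉ T) (hwb : w ≠ ⊥) (hmw : m ≠ w) :
    sgn T m * sgn (insert w (insert m T)) w
      = sgn (insert w (insert ⊥ T)) w * sgn (insert w T) m := by
  have h1 : sgn (insert w (insert m T)) w = sgn (insert m T) w := by
    rw [sgn_insert (fun hc => by
      rcases Finset.mem_insert.mp hc with h | h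
      exacts [hmw h.symm, hw h]) w, if_neg (lt_irrefl w), one_mul]
  have h2 : sgn (insert m T) w = (if m < w then -1 else 1) * sgn T w := sgn_insert hm w
  have h3 : sgn (insert w (insert ⊥ T)) w = sgn (insert ⊥ T) w := by
    rw [sgn_insert (fun hc => by
      rcases Finset.mem_insert.mp hc with h | h
      exacts [hwb h, hw h]) w, if_neg (lt_irrefl w), one_mul]
  have h4 : sgn (insert ⊥ T) w = - sgn T w := sgn_insert_bot hbT hwb
  have h5 : sgn (insert w T) m = (if w < m then -1 else 1) * sgn T m := sgn_insert hw m
  rw [h1, h2, h3, h4, h5]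
  rcases lt_or_gt_of_ne hmw with h | h
  · rw [if_pos h, if_neg (asymm h)]; ring
  · rw [if_neg (asymm h), if_pos h]; ring

lemma pstar_singleton {I : Finset (Fin (n+1))} {σ : Finset (VV n)}
    (hb : (⊥ : VV n) ∈ σ) {a : Fin (n+1)} (h : missing I σ = {a}) :
    pstarCo I σ = sgn (σ.erase ⊥) (a : VV n) • deltaCh (insert (a : VV n) (σ.erase ⊥)) := by
  have hcard : (missing I σ).card = 1 := by rw [h]; rfl
  rw [pstar_of_card_one hb hcard]
  have hmin : ((missing I σ).min' (Finset.card_pos.mp (by omega))) = a := by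
    simp [h]
  rw [hmin]

lemma not_subset_of_missing_ne {I : Finset (Fin (n+1))} {τ : Finset (VV n)}
    (h : missing I τ ≠ ∅) : ¬ coeIm I ⊆ τ :=
  fun hc => h (missing_eq_empty_iff.mpr hc)

lemma card_erase_ge {α : Type*} [DecidableEq α] (s : Finset α) (a : α) :
    s.card - 1 ≤ (s.erase a).card := by
  by_cases h : a ∈ s
  · rw [Finset.card_erase_of_mem h]
  · rw [Finset.erase_eq_of_notMem h]
    omega

lemma stmt1b_bot (T : Finset (VV n)) (hbT : (⊥ : VV n) ∉ T)
    (hns : ¬ coeIm I ⊆ T) :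
    liftCh dDelGen (pstarCo I (insert ⊥ T)) = liftCh (pstarCo I) (dSubGen I (insert ⊥ T)) := by
  have hmb : missing I (insert ⊥ T) = missing I T := missing_insert_bot _ _
  have hrpos : 0 < (missing I T).card := Finset.card_pos.mpr (missing_nonempty hns)
  rw [liftCh_dSub]
  by_cases hr1 : (missing I T).card = 1
  · -- r = 1
    obtain ⟨a, ha⟩ := Finset.card_eq_one.mp hr1
    have haI : a ∈ I := (mem_missing.mp (ha ▸ Finset.mem_singleton_self a)).1
    have haT : (a : VV n) ∉ T := (mem_missing.mp (ha ▸ Finset.mem_singleton_self a)).2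
    rw [pstar_singleton (Finset.mem_insert_self _ _) (hmb.trans ha), Finset.erase_insert hbT,
      liftCh_smul, liftCh_delta]
    unfold dDelGen
    rw [Finset.smul_sum]
    refine Finset.sum_congr rfl fun w _ => ?_
    by_cases hwb : w = ⊥
    · subst hwb
      rw [if_neg (fun h => h.2 rfl), smul_zero,
        if_neg (fun h => h.1 (Finset.mem_insert_self _ _))]
    · by_cases hwT : w ∈ T
      · rw [if_neg (fun h => h.1 (Finset.mem_insert_of_mem hwT)), smul_zero,
          if_neg (fun h => h.1 (Finset.mem_insert_of_mem hwT))]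
      · obtain ⟨d, rfl⟩ := coe_of_ne_bot hwb
        have hwi : (d : VV n) ∉ insert (⊥ : VV n) T := by
          simp only [Finset.mem_insert, not_or]
          exact ⟨WithBot.coe_ne_bot, hwT⟩
        by_cases hda : d = a
        · subst hda
          rw [if_neg (fun h => h.1 (Finset.mem_insert_self _ _)), smul_zero, if_neg]
          rintro ⟨_, hsub⟩
          apply hsub.2
          apply missing_eq_empty_iff.mp
          rw [missing_insert_coe, hmb, ha, Finset.erase_singleton]
        · have hwa : ((d : VV n)) ≠ (a : VV n) := by exact_mod_cast hda
          have hmiss : missing I (insert (d : VV n) (insert ⊥ T)) = {a} := by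
            rw [missing_insert_coe, hmb, ha, Finset.erase_eq_of_notMem
              (Finset.notMem_singleton.mpr hda)]
          rw [if_pos ⟨fun h => (by
              rcases Finset.mem_insert.mp h with h | h
              · exact hwa h
              · exact hwT h : False), hwb⟩,
            if_pos ⟨hwi, (subd_insert_iff _ _).mpr (not_subset_of_missing_ne (by
            rw [hmiss]; exact Finset.singleton_ne_empty a))⟩]
          rw [pstar_singleton (Finset.mem_insert_of_mem (Finset.mem_insert_self _ _)) hmiss,
            erase_bot_insert hbT hwb, smul_smul, smul_smul,
            sgn_key2 hbT haT hwT hwb hwa.symm, Finset.insert_comm (d : VV n) (a : VV n) T]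
  by_cases hr2 : (missing I T).card = 2
  · -- r = 2
    rw [pstar_of_card_ne (Finset.mem_insert_self _ _) (by rw [hmb]; omega), liftCh_zero]
    symm
    obtain ⟨a, b, hab, hmT⟩ := Finset.card_eq_two.mp hr2
    have haI : a ∈ I := (mem_missing.mp (hmT ▸ by simp : a ∈ missing I T)).1
    have haT : (a : VV n) ∉ T := (mem_missing.mp (hmT ▸ by simp : a ∈ missing I T)).2
    have hbI : b ∈ I := (mem_missing.mp (hmT ▸ by simp : b ∈ missing I T)).1
    have hbTm : (b : VV n) ∉ T := (mem_missing.mp (hmT ▸ by simp : b ∈ missing I T)).2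
    have hzero : ∀ w ∈ (Finset.univ : Finset (VV n)),
        w ∉ ({(a : VV n), (b : VV n)} : Finset (VV n)) →
        (if w ∉ insert ⊥ T ∧ IsSubd I (insert w (insert ⊥ T)) then
          sgn (insert w (insert ⊥ T)) w • pstarCo I (insert w (insert ⊥ T)) else 0) = 0 := by
      intro w _ hwp
      by_cases hwi : w ∈ insert (⊥:VV n) T
      · rw [if_neg (fun h => h.1 hwi)]
      · have hwb : w ≠ ⊥ := fun h => hwi (h ▸ Finset.mem_insert_self _ _)
        obtain ⟨d, rfl⟩ := coe_of_ne_bot hwb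
        have hd : d ∉ ({a, b} : Finset (Fin (n+1))) := by
          simp only [Finset.mem_insert, Finset.mem_singleton] at hwp ⊢
          push_neg at hwp ⊢
          exact ⟨by exact_mod_cast hwp.1, by exact_mod_cast hwp.2⟩
        have hmiss : missing I (insert (d:VV n) (insert ⊥ T)) = {a, b} := by
          rw [missing_insert_coe, hmb, hmT, Finset.erase_eq_of_notMem hd]
        rw [pstar_of_card_ne (by
            exact Finset.mem_insert_of_mem (Finset.mem_insert_self _ _))
          (by rw [hmiss, Finset.card_pair hab]; omega), smul_zero, ite_self]
    rw [← Finset.sum_subset (Finset.subset_univ ({(a : VV n), (b : VV n)} : Finset (VV n))) hzero]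
    have habv : (a : VV n) ≠ (b : VV n) := by exact_mod_cast hab
    rw [Finset.sum_pair habv]
    have hmissa : missing I (insert (a:VV n) (insert ⊥ T)) = {b} := by
      rw [missing_insert_coe, hmb, hmT,
        Finset.erase_insert (Finset.notMem_singleton.mpr hab)]
    have hmissb : missing I (insert (b:VV n) (insert ⊥ T)) = {a} := by
      rw [missing_insert_coe, hmb, hmT, Finset.pair_comm,
        Finset.erase_insert (Finset.notMem_singleton.mpr (Ne.symm hab))]
    have hanb : (a : VV n) ∉ insert (⊥:VV n) T := by
      simp only [Finset.mem_insert, not_or]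
      exact ⟨WithBot.coe_ne_bot, haT⟩
    have hbnb : (b : VV n) ∉ insert (⊥:VV n) T := by
      simp only [Finset.mem_insert, not_or]
      exact ⟨WithBot.coe_ne_bot, hbTm⟩
    rw [if_pos ⟨hanb, (subd_insert_iff _ _).mpr (not_subset_of_missing_ne
        (by rw [hmissa]; exact Finset.singleton_ne_empty b))⟩,
      if_pos ⟨hbnb, (subd_insert_iff _ _).mpr (not_subset_of_missing_ne
        (by rw [hmissb]; exact Finset.singleton_ne_empty a))⟩,
      pstar_singleton (Finset.mem_insert_of_mem (Finset.mem_insert_self _ _)) hmissa,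
      pstar_singleton (Finset.mem_insert_of_mem (Finset.mem_insert_self _ _)) hmissb,
      erase_bot_insert hbT (WithBot.coe_ne_bot), erase_bot_insert hbT (WithBot.coe_ne_bot)]
    have e1 : sgn (insert (a:VV n) (insert ⊥ T)) (a:VV n) = - sgn T (a:VV n) := by
      rw [sgn_insert hanb, if_neg (lt_irrefl _), one_mul, sgn_insert_bot hbT WithBot.coe_ne_bot]
    have e2 : sgn (insert (b:VV n) (insert ⊥ T)) (b:VV n) = - sgn T (b:VV n) := by
      rw [sgn_insert hbnb, if_neg (lt_irrefl _), one_mul, sgn_insert_bot hbT WithBot.coe_ne_bot]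
    have e3 : sgn (insert (a:VV n) T) (b:VV n)
        = (if (a:VV n) < (b:VV n) then -1 else 1) * sgn T (b:VV n) := sgn_insert haT _
    have e4 : sgn (insert (b:VV n) T) (a:VV n)
        = (if (b:VV n) < (a:VV n) then -1 else 1) * sgn T (a:VV n) := sgn_insert hbTm _
    rw [e1, e2, e3, e4, smul_smul, smul_smul, Finset.insert_comm, ← add_smul]
    rcases lt_or_gt_of_ne habv with h | h
    · rw [if_pos h, if_neg (asymm h)]
      rw [show -sgn T (a:VV n) * (-1 * sgn T (b:VV n))
          + -sgn T (b:VV n) * (1 * sgn T (a:VV n)) = 0 from by ring, zero_smul]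
    · rw [if_neg (asymm h), if_pos h]
      rw [show -sgn T (a:VV n) * (1 * sgn T (b:VV n))
          + -sgn T (b:VV n) * (-1 * sgn T (a:VV n)) = 0 from by ring, zero_smul]
  · -- r ≥ 3
    rw [pstar_of_card_ne (Finset.mem_insert_self _ _) (by rw [hmb]; omega), liftCh_zero]
    symm
    apply Finset.sum_eq_zero
    intro w _
    by_cases hwi : w ∈ insert (⊥:VV n) T
    · rw [if_neg (fun h => h.1 hwi)]
    · have hwb : w ≠ ⊥ := fun h => hwi (h ▸ Finset.mem_insert_self _ _)
      obtain ⟨d, rfl⟩ := coe_of_ne_bot hwb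
      have hcard : (missing I (insert (d:VV n) (insert ⊥ T))).card ≠ 1 := by
        rw [missing_insert_coe, hmb]
        have := card_erase_ge (missing I T) d
        omega
      rw [pstar_of_card_ne (Finset.mem_insert_of_mem (Finset.mem_insert_self _ _)) hcard,
        smul_zero, ite_self]

lemma stmt1b (σ : Finset (VV n)) (hσ : IsSubd I σ) :
    liftCh dDelGen (pstarCo I σ) = liftCh (pstarCo I) (dSubGen I σ) := by
  obtain ⟨hne, hns⟩ := hσ
  by_cases hbm : (⊥ : VV n) ∈ σ
  · have hns' : ¬ coeIm I ⊆ σ.erase ⊥ := fun h => hns (h.trans (Finset.erase_subset _ _))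
    rw [← Finset.insert_erase hbm]
    exact stmt1b_bot _ (Finset.notMem_erase _ _) hns'
  · rw [pstar_of_not_bot hbm, liftCh_delta, liftCh_dSub]
    unfold dDelGen
    have hrpos : 0 < (missing I σ).card := Finset.card_pos.mpr (missing_nonempty hns)
    by_cases hr1 : (missing I σ).card = 1
    · obtain ⟨a, ha⟩ := Finset.card_eq_one.mp hr1
      have haI : a ∈ I := (mem_missing.mp (ha ▸ Finset.mem_singleton_self a)).1
      have haσ : (a : VV n) ∉ σ := (mem_missing.mp (ha ▸ Finset.mem_singleton_self a)).2
      have hL : ∀ w : VV n,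
          (if w ∉ σ ∧ w ≠ ⊥ then sgn (insert w σ) w • deltaCh (insert w σ) else 0)
          = (if w ∉ σ ∧ w ≠ ⊥ ∧ ¬ coeIm I ⊆ insert w σ then
              sgn (insert w σ) w • deltaCh (insert w σ) else 0)
            + (if w = (a : VV n) then
                sgn (insert (a : VV n) σ) ((a : VV n)) • deltaCh (insert (a : VV n) σ) else 0) := by
        intro w
        by_cases hwa : w = (a : VV n)
        · subst hwa
          rw [if_pos ⟨haσ, WithBot.coe_ne_bot⟩, if_neg, if_pos rfl, zero_add]
          rintro ⟨_, _, hsub⟩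
          exact hsub (missing_eq_empty_iff.mp
            (by rw [missing_insert_coe, ha, Finset.erase_singleton]))
        · rw [if_neg hwa, add_zero]
          by_cases hw : w ∉ σ ∧ w ≠ ⊥
          · have hnotsub : ¬ coeIm I ⊆ insert w σ := by
              intro hsub
              obtain ⟨d, rfl⟩ := coe_of_ne_bot hw.2
              have hthis : missing I (insert (d : VV n) σ) = ∅ := missing_eq_empty_iff.mpr hsub
              rw [missing_insert_coe, ha] at hthis
              have hd : d ≠ a := fun h => hwa (by rw [h])
              rw [Finset.erase_eq_of_notMem (Finset.notMem_singleton.mpr hd)] at hthis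
              exact Finset.singleton_ne_empty a hthis
            rw [if_pos hw, if_pos ⟨hw.1, hw.2, hnotsub⟩]
          · rw [if_neg hw, if_neg (fun h => hw ⟨h.1, h.2.1⟩)]
      have hR : ∀ w : VV n,
          (if w ∉ σ ∧ IsSubd I (insert w σ) then
            sgn (insert w σ) w • pstarCo I (insert w σ) else 0)
          = (if w ∉ σ ∧ w ≠ ⊥ ∧ ¬ coeIm I ⊆ insert w σ then
              sgn (insert w σ) w • deltaCh (insert w σ) else 0)
            + (if w = ⊥ then sgn σ ((a : VV n)) • deltaCh (insert (a : VV n) σ) else 0) := by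
        intro w
        by_cases hwb : w = ⊥
        · subst hwb
          have hsubd : IsSubd I (insert (⊥ : VV n) σ) := (subd_insert_iff _ _).mpr
            (fun h => (not_subset_of_missing_ne
              (by rw [ha]; exact Finset.singleton_ne_empty a)) (coeIm_subset_insert_bot.mp h))
          have hn : ¬((⊥ : VV n) ∉ σ ∧ (⊥ : VV n) ≠ ⊥ ∧ ¬ coeIm I ⊆ insert (⊥ : VV n) σ) :=
            fun h => h.2.1 rfl
          rw [if_pos ⟨hbm, hsubd⟩, if_neg hn, zero_add, if_pos rfl,
            pstar_singleton (Finset.mem_insert_self _ _)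
              ((missing_insert_bot I σ).trans ha),
            Finset.erase_insert hbm, sgn_bot, one_smul]
        · by_cases hwσ : w ∈ σ
          · rw [if_neg (fun h => h.1 hwσ), if_neg (fun h => h.1 hwσ), if_neg hwb, add_zero]
          · have hpd : pstarCo I (insert w σ) = deltaCh (insert w σ) := by
              apply pstar_of_not_bot
              simp only [Finset.mem_insert, not_or]
              exact ⟨fun h => hwb h.symm, hbm⟩
            have hiff : (w ∉ σ ∧ IsSubd I (insert w σ))
                ↔ (w ∉ σ ∧ w ≠ ⊥ ∧ ¬ coeIm I ⊆ insert w σ) := by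
              rw [subd_insert_iff]
              tauto
            rw [if_neg hwb, add_zero, if_congr hiff rfl rfl, hpd]
      rw [Finset.sum_congr rfl (fun w _ => hL w), Finset.sum_congr rfl (fun w _ => hR w),
        Finset.sum_add_distrib, Finset.sum_add_distrib,
        Finset.sum_ite_eq' Finset.univ ((a : VV n)), Finset.sum_ite_eq' Finset.univ (⊥ : VV n),
        if_pos (Finset.mem_univ _), if_pos (Finset.mem_univ _)]
      congr 2
      rw [sgn_insert haσ, if_neg (lt_irrefl _), one_mul]
    · refine Finset.sum_congr rfl fun w _ => ?_
      by_cases hwb : w = ⊥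
      · subst hwb
        rw [if_neg (fun h => h.2 rfl),
          pstar_of_card_ne (Finset.mem_insert_self _ _)
            (by rw [missing_insert_bot]; exact hr1), smul_zero, ite_self]
      · by_cases hwσ : w ∈ σ
        · rw [if_neg (fun h => h.1 hwσ), if_neg (fun h => h.1 hwσ)]
        · have hpd : pstarCo I (insert w σ) = deltaCh (insert w σ) := by
            apply pstar_of_not_bot
            simp only [Finset.mem_insert, not_or]
            exact ⟨fun h => hwb h.symm, hbm⟩
          have hsubd : IsSubd I (insert w σ) := by
            rw [subd_insert_iff]
            obtain ⟨d, rfl⟩ := coe_of_ne_bot hwb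
            apply not_subset_of_missing_ne
            rw [missing_insert_coe]
            have := card_erase_ge (missing I σ) d
            intro hc
            rw [hc] at this
            simp at this
            omega
          rw [if_pos ⟨hwσ, hwb⟩, if_pos ⟨hwσ, hsubd⟩, hpd]

lemma dsub_cross {σ : Finset (VV n)} (hb : (⊥ : VV n) ∉ σ) :
    ∑ v ∈ (σ ∩ coeIm I), sgn σ v • dSubGen I (insert ⊥ (σ.erase v))
      = (∑ w : VV n, if w ∉ σ ∧ w ≠ ⊥ then
          ∑ v ∈ (σ ∩ coeIm I), (sgn (insert w σ) w * sgn (insert w σ) v) •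
            deltaCh (insert ⊥ ((insert w σ).erase v)) else 0)
        + (σ ∩ coeIm I).card • (if ¬ coeIm I ⊆ σ then -deltaCh (insert ⊥ σ) else 0) := by
  have pointv : ∀ v ∈ (σ ∩ coeIm I), sgn σ v • dSubGen I (insert ⊥ (σ.erase v))
      = (∑ w : VV n, if w ∉ σ ∧ w ≠ ⊥ then
            (sgn (insert w σ) w * sgn (insert w σ) v) •
              deltaCh (insert ⊥ ((insert w σ).erase v)) else 0)
        + (if ¬ coeIm I ⊆ σ then -deltaCh (insert ⊥ σ) else 0) := by
    intro v hv
    obtain ⟨hvσ, hvI⟩ := Finset.mem_inter.mp hv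
    have hvb : v ≠ ⊥ := mem_coeIm_ne_bot hvI
    unfold dSubGen
    rw [Finset.smul_sum]
    have pw : ∀ w : VV n,
        sgn σ v • (if w ∉ insert ⊥ (σ.erase v) ∧ IsSubd I (insert w (insert ⊥ (σ.erase v))) then
            sgn (insert w (insert ⊥ (σ.erase v))) w • deltaCh (insert w (insert ⊥ (σ.erase v)))
          else 0)
        = (if w ∉ σ ∧ w ≠ ⊥ then
            (sgn (insert w σ) w * sgn (insert w σ) v) •
              deltaCh (insert ⊥ ((insert w σ).erase v)) else 0)
          + (if w = v then (if ¬ coeIm I ⊆ σ then -deltaCh (insert ⊥ σ) else 0) else 0) := by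
      intro w
      by_cases hwb : w = ⊥
      · subst hwb
        rw [if_neg (by simp), smul_zero, if_neg (by tauto), if_neg (fun h => hvb h.symm),
          add_zero]
      by_cases hwv : w = v
      · subst hwv
        have hn1 : ¬(w ∉ σ ∧ w ≠ ⊥) := fun h => h.1 hvσ
        rw [if_neg hn1, zero_add, if_pos rfl]
        by_cases hcs : coeIm I ⊆ σ
        · rw [if_neg (not_not_intro hcs), if_neg, smul_zero]
          rintro ⟨_, hsub⟩
          have := hsub.2
          rw [set_e hvσ] at this
          exact this (coeIm_subset_insert_bot.mpr hcs)
        · rw [if_pos hcs, if_pos]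
          · rw [smul_smul]
            have h1 : sgn (insert w (insert ⊥ (σ.erase w))) w = - sgn σ w :=
              sgn_diag hb hvσ
            rw [h1, mul_neg, sgn_sq, set_e hvσ, neg_one_smul]
          · refine ⟨?_, ?_⟩
            · simp only [Finset.mem_insert, not_or]
              exact ⟨hwb, Finset.notMem_erase _ _⟩
            · rw [subd_insert_iff, set_e hvσ]
              exact fun h => hcs (coeIm_subset_insert_bot.mp h)
      · rw [if_neg hwv, add_zero]
        by_cases hwσ : w ∈ σ
        · have hn1 : ¬(w ∉ σ ∧ w ≠ ⊥) := fun h => h.1 hwσ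
          have hn2 : ¬(w ∉ insert ⊥ (σ.erase v)
              ∧ IsSubd I (insert w (insert ⊥ (σ.erase v)))) :=
            fun h => h.1 (Finset.mem_insert_of_mem (Finset.mem_erase.mpr ⟨hwv, hwσ⟩))
          rw [if_neg hn2, if_neg hn1, smul_zero]
        · have hvw : v ≠ w := fun h => hwv h.symm
          rw [if_pos, if_pos ⟨hwσ, hwb⟩, smul_smul, sgn_key hb hvσ hwσ hwb hvw,
            set_d hb hvw]
          refine ⟨?_, ?_⟩
          · simp only [Finset.mem_insert, not_or]
            exact ⟨hwb, fun h => hwσ (Finset.mem_of_mem_erase h)⟩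
          · rw [subd_insert_iff]
            intro hsub
            have hvmem := hsub hvI
            simp only [Finset.mem_insert] at hvmem
            rcases hvmem with h | h | h
            · exact hvw h
            · exact hvb h
            · exact (Finset.notMem_erase v σ) h
    rw [Finset.sum_congr rfl (fun w _ => pw w), Finset.sum_add_distrib]
    congr 1
    have : ∀ w : VV n, (if w = v then (if ¬ coeIm I ⊆ σ then -deltaCh (insert ⊥ σ) else 0) else 0)
        = if w = v then (fun _ : VV n => (if ¬ coeIm I ⊆ σ then -deltaCh (insert ⊥ σ) else 0)) w else 0 :=
      fun w => rfl
    rw [Finset.sum_congr rfl (fun w _ => this w),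
      Finset.sum_ite_eq' Finset.univ v _, if_pos (Finset.mem_univ _)]
  rw [Finset.sum_congr rfl pointv, Finset.sum_add_distrib]
  congr 1
  · rw [Finset.sum_comm]
    refine Finset.sum_congr rfl fun w _ => ?_
    rw [ite_out]
  · rw [Finset.sum_const]

lemma card_sdiff_missing (I : Finset (Fin (n+1))) (τ : Finset (VV n)) :
    (coeIm I \ τ).card = (missing I τ).card := by
  have h : coeIm I \ τ = coeIm (missing I τ) := by
    ext x
    simp only [Finset.mem_sdiff]
    constructor
    · rintro ⟨hx, hxτ⟩
      rcases mem_coeIm'.mp hx with ⟨a, haI, rfl⟩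
      exact mem_coeIm'.mpr ⟨a, mem_missing.mpr ⟨haI, hxτ⟩, rfl⟩
    · intro hx
      rcases mem_coeIm'.mp hx with ⟨a, ham, rfl⟩
      rcases mem_missing.mp ham with ⟨h1, h2⟩
      exact ⟨mem_coeIm.mpr h1, h2⟩
  rw [h, card_coeIm]

set_option maxHeartbeats 1000000 in
lemma stmt3_bot (hI : I.Nonempty) (T : Finset (VV n)) (hbT : (⊥ : VV n) ∉ T)
    (hns : ¬ coeIm I ⊆ T) :
    liftCh (dSubGen I) (astarCo I (insert ⊥ T)) + liftCh (astarCo I) (dSubGen I (insert ⊥ T))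
      = deltaCh (insert ⊥ T) - liftCh (istarCo I) (pstarCo I (insert ⊥ T)) := by
  have hk : (I.card : ℝ) ≠ 0 := by
    have := Finset.card_pos.mpr hI
    positivity
  have hbi : (⊥ : VV n) ∈ insert ⊥ T := Finset.mem_insert_self _ _
  have hrpos : 0 < (missing I T).card := Finset.card_pos.mpr (missing_nonempty hns)
  have hmb : missing I (insert ⊥ T) = missing I T := missing_insert_bot _ _
  have hcardA : ((T ∩ coeIm I).card : ℝ) = (I.card : ℝ) - ((missing I T).card : ℝ) := by
    have h1 : (coeIm I ∩ T).card + (coeIm I \ T).card = I.card := by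
      rw [← card_coeIm (n := n) I]
      exact Finset.card_inter_add_card_sdiff _ _
    rw [Finset.inter_comm, card_sdiff_missing] at h1
    have h2 : ((T ∩ coeIm I).card : ℝ) + ((missing I T).card : ℝ) = (I.card : ℝ) := by
      exact_mod_cast h1
    linarith
  have h1 : liftCh (dSubGen I) (astarCo I (insert ⊥ T))
      = - (I.card : ℝ)⁻¹ • (∑ w : VV n, if w ∉ T ∧ w ≠ ⊥ then
          ∑ v ∈ (T ∩ coeIm I), (sgn (insert w T) w * sgn (insert w T) v) •
            deltaCh (insert ⊥ ((insert w T).erase v)) else 0)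
        + ((I.card : ℝ)⁻¹ * ((T ∩ coeIm I).card : ℝ)) • deltaCh (insert ⊥ T) := by
    rw [liftCh_astar _ hbi, Finset.erase_insert hbT, dsub_cross hbT, if_pos hns, smul_add]
    congr 1
    rw [← Nat.cast_smul_eq_nsmul ℝ, smul_smul, smul_neg, ← neg_smul]
    congr 1
    ring
  have h2 : liftCh (astarCo I) (dSubGen I (insert ⊥ T))
      = (I.card : ℝ)⁻¹ • (∑ w : VV n,
          if (w ∉ insert (⊥ : VV n) T ∧ IsSubd I (insert w (insert ⊥ T))) ∧ w ∈ coeIm I then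
            deltaCh (insert ⊥ T) else 0)
        + (I.card : ℝ)⁻¹ • (∑ w : VV n,
          if w ∉ insert (⊥ : VV n) T ∧ IsSubd I (insert w (insert ⊥ T)) then
            ∑ v ∈ (T ∩ coeIm I), (sgn (insert w T) w * sgn (insert w T) v) •
              deltaCh (insert ⊥ ((insert w T).erase v)) else 0) := by
    rw [liftCh_dSub]
    have pw : ∀ w : VV n,
        (if w ∉ insert (⊥ : VV n) T ∧ IsSubd I (insert w (insert ⊥ T)) then
          sgn (insert w (insert ⊥ T)) w • astarCo I (insert w (insert ⊥ T)) else 0)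
        = (I.card : ℝ)⁻¹ • (if (w ∉ insert (⊥ : VV n) T ∧ IsSubd I (insert w (insert ⊥ T)))
              ∧ w ∈ coeIm I then deltaCh (insert ⊥ T) else 0)
          + (I.card : ℝ)⁻¹ • (if w ∉ insert (⊥ : VV n) T ∧ IsSubd I (insert w (insert ⊥ T)) then
              ∑ v ∈ (T ∩ coeIm I), (sgn (insert w T) w * sgn (insert w T) v) •
                deltaCh (insert ⊥ ((insert w T).erase v)) else 0) := by
      intro w
      by_cases hcond : w ∉ insert (⊥ : VV n) T ∧ IsSubd I (insert w (insert ⊥ T))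
      · have hwb : w ≠ ⊥ := fun h => hcond.1 (h ▸ Finset.mem_insert_self _ _)
        have hwT : w ∉ T := fun h => hcond.1 (Finset.mem_insert_of_mem h)
        have hsw : sgn (insert w (insert ⊥ T)) w = - sgn (insert w T) w := by
          rw [sgn_insert hcond.1 w, if_neg (lt_irrefl w), one_mul, sgn_insert_bot hbT hwb,
            sgn_insert hwT w, if_neg (lt_irrefl w), one_mul]
        rw [if_pos hcond, astar_of_bot (Finset.mem_insert_of_mem hbi),
          erase_bot_insert hbT hwb]
        have hkey : ∀ Z : Ch n, sgn (insert w (insert ⊥ T)) w • (- (I.card : ℝ)⁻¹ • Z)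
            = (I.card : ℝ)⁻¹ • (sgn (insert w T) w • Z) := by
          intro Z
          rw [hsw, smul_smul, smul_smul]
          congr 1
          ring
        rw [hkey]
        by_cases hwI : w ∈ coeIm I
        · have hwA : w ∉ T ∩ coeIm I := fun h => hwT (Finset.mem_inter.mp h).1
          rw [Finset.insert_inter_of_mem hwI, Finset.sum_insert hwA, if_pos ⟨hcond, hwI⟩,
            if_pos hcond, Finset.erase_insert hwT, smul_add, smul_smul, sgn_sq, one_smul,
            smul_add]
          congr 1
          congr 1
          rw [Finset.smul_sum]
          refine Finset.sum_congr rfl fun v _ => ?_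
          rw [smul_smul]
        · rw [Finset.insert_inter_of_notMem hwI, if_neg (fun h => hwI h.2), smul_zero,
            zero_add, if_pos hcond]
          congr 1
          rw [Finset.smul_sum]
          refine Finset.sum_congr rfl fun v _ => ?_
          rw [smul_smul]
      · rw [if_neg hcond, if_neg (fun h => hcond h.1), if_neg hcond]
        simp
    rw [Finset.sum_congr rfl (fun w _ => pw w), Finset.sum_add_distrib, ← Finset.smul_sum,
      ← Finset.smul_sum]
  rw [h1, h2]
  by_cases hr1 : (missing I T).card = 1
  · -- r = 1
    obtain ⟨a, ha⟩ := Finset.card_eq_one.mp hr1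
    have haI : a ∈ I := (mem_missing.mp (ha ▸ Finset.mem_singleton_self a)).1
    have haT : (a : VV n) ∉ T := (mem_missing.mp (ha ▸ Finset.mem_singleton_self a)).2
    have hani : (a : VV n) ∉ insert (⊥ : VV n) T := by
      simp only [Finset.mem_insert, not_or]
      exact ⟨WithBot.coe_ne_bot, haT⟩
    have hsubd_a : ¬ IsSubd I (insert ((a : VV n)) (insert ⊥ T)) := by
      rw [subd_insert_iff]
      intro h
      exact h (missing_eq_empty_iff.mp (by
        rw [missing_insert_coe, hmb, ha, Finset.erase_singleton]))
    have hsubd_other : ∀ w : VV n, w ∉ T → w ≠ ⊥ → w ≠ (a : VV n) →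
        IsSubd I (insert w (insert ⊥ T)) := by
      intro w hwT hwb hwa
      obtain ⟨d, rfl⟩ := coe_of_ne_bot hwb
      rw [subd_insert_iff]
      apply not_subset_of_missing_ne
      rw [missing_insert_coe, hmb, ha, Finset.erase_eq_of_notMem
        (Finset.notMem_singleton.mpr (fun h => hwa (by rw [h])))]
      exact Finset.singleton_ne_empty a
    have hCrossRel : (∑ w : VV n, if w ∉ T ∧ w ≠ ⊥ then
          ∑ v ∈ (T ∩ coeIm I), (sgn (insert w T) w * sgn (insert w T) v) •
            deltaCh (insert ⊥ ((insert w T).erase v)) else 0)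
        = (∑ w : VV n, if w ∉ insert (⊥ : VV n) T ∧ IsSubd I (insert w (insert ⊥ T)) then
            ∑ v ∈ (T ∩ coeIm I), (sgn (insert w T) w * sgn (insert w T) v) •
              deltaCh (insert ⊥ ((insert w T).erase v)) else 0)
          + ∑ v ∈ (T ∩ coeIm I),
              (sgn (insert ((a : VV n)) T) ((a : VV n)) * sgn (insert ((a : VV n)) T) v) •
                deltaCh (insert ⊥ ((insert ((a : VV n)) T).erase v)) := by
      have hptw : ∀ w : VV n, (if w ∉ T ∧ w ≠ ⊥ then
            ∑ v ∈ (T ∩ coeIm I), (sgn (insert w T) w * sgn (insert w T) v) •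
              deltaCh (insert ⊥ ((insert w T).erase v)) else 0)
          = (if w ∉ insert (⊥ : VV n) T ∧ IsSubd I (insert w (insert ⊥ T)) then
              ∑ v ∈ (T ∩ coeIm I), (sgn (insert w T) w * sgn (insert w T) v) •
                deltaCh (insert ⊥ ((insert w T).erase v)) else 0)
            + (if w = (a : VV n) then
                (fun _ : VV n => ∑ v ∈ (T ∩ coeIm I),
                  (sgn (insert ((a : VV n)) T) ((a : VV n)) * sgn (insert ((a : VV n)) T) v) •
                    deltaCh (insert ⊥ ((insert ((a : VV n)) T).erase v))) w else 0) := by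
        intro w
        by_cases hwa : w = (a : VV n)
        · subst hwa
          rw [if_pos ⟨haT, WithBot.coe_ne_bot⟩, if_neg (fun h => hsubd_a h.2), zero_add,
            if_pos rfl]
        · rw [if_neg hwa, add_zero]
          by_cases hw : w ∉ T ∧ w ≠ ⊥
          · rw [if_pos hw, if_pos ⟨by
              simp only [Finset.mem_insert, not_or]
              exact ⟨hw.2, hw.1⟩, hsubd_other w hw.1 hw.2 hwa⟩]
          · have hn2 : ¬(w ∉ insert (⊥ : VV n) T ∧ IsSubd I (insert w (insert ⊥ T))) := by
              intro h
              exact hw ⟨fun hc => h.1 (Finset.mem_insert_of_mem hc),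
                fun hc => h.1 (hc ▸ Finset.mem_insert_self _ _)⟩
            rw [if_neg hw, if_neg hn2]
      rw [Finset.sum_congr rfl (fun w _ => hptw w), Finset.sum_add_distrib,
        Finset.sum_ite_eq' Finset.univ ((a : VV n)), if_pos (Finset.mem_univ _)]
    have hDiag0 : (∑ w : VV n,
        if (w ∉ insert (⊥ : VV n) T ∧ IsSubd I (insert w (insert ⊥ T))) ∧ w ∈ coeIm I then
          deltaCh (insert ⊥ T) else 0) = 0 := by
      apply Finset.sum_eq_zero
      intro w _
      rw [if_neg]
      rintro ⟨⟨hw1, hw2⟩, hwI⟩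
      rcases mem_coeIm'.mp hwI with ⟨b, hbI, rfl⟩
      have hbT' : (b : VV n) ∉ T := fun h => hw1 (Finset.mem_insert_of_mem h)
      have hba : b ∈ missing I T := mem_missing.mpr ⟨hbI, hbT'⟩
      rw [ha, Finset.mem_singleton] at hba
      subst hba
      exact hsubd_a hw2
    have hPstar : pstarCo I (insert ⊥ T)
        = sgn T ((a : VV n)) • deltaCh (insert ((a : VV n)) T) := by
      rw [pstar_singleton hbi (hmb.trans ha), Finset.erase_insert hbT]
    have hIstar : liftCh (istarCo I) (pstarCo I (insert ⊥ T))
        = (I.card : ℝ)⁻¹ • deltaCh (insert ⊥ T)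
          + (I.card : ℝ)⁻¹ • ∑ v ∈ (T ∩ coeIm I),
              (sgn (insert ((a : VV n)) T) ((a : VV n)) * sgn (insert ((a : VV n)) T) v) •
                deltaCh (insert ⊥ ((insert ((a : VV n)) T).erase v)) := by
      rw [hPstar, liftCh_smul, liftCh_delta]
      unfold istarCo
      have hsub : coeIm I ⊆ insert ((a : VV n)) T := missing_eq_empty_iff.mp (by
        rw [missing_insert_coe, ha, Finset.erase_singleton])
      rw [if_neg (not_not_intro hsub), zero_add]
      have haiA : ((a : VV n)) ∉ T ∩ coeIm I := fun h => haT (Finset.mem_inter.mp h).1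
      have hsa : sgn (insert ((a : VV n)) T) ((a : VV n)) = sgn T ((a : VV n)) := by
        rw [sgn_insert haT, if_neg (lt_irrefl _), one_mul]
      rw [Finset.insert_inter_of_mem (mem_coeIm.mpr haI), Finset.sum_insert haiA,
        Finset.erase_insert haT, hsa]
      rw [show ∀ Z : Ch n, sgn T ((a : VV n)) • ((I.card : ℝ)⁻¹ • Z)
          = (I.card : ℝ)⁻¹ • (sgn T ((a : VV n)) • Z) from fun Z => smul_comm _ _ _]
      rw [smul_add, smul_smul, sgn_sq, one_smul, smul_add]
      congr 1
      congr 1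
      rw [Finset.smul_sum]
      refine Finset.sum_congr rfl fun v _ => ?_
      rw [smul_smul]
    rw [hCrossRel, hDiag0, hIstar, smul_zero]
    have hmval : ((I.card : ℝ)⁻¹ * ((T ∩ coeIm I).card : ℝ)) = 1 - (I.card : ℝ)⁻¹ := by
      rw [hcardA, hr1]
      push_cast
      field_simp
    rw [hmval, sub_smul, one_smul, smul_add, neg_smul, neg_smul]
    abel
  · -- r ≥ 2
    have hsubd_all : ∀ w : VV n, w ∉ T → w ≠ ⊥ → IsSubd I (insert w (insert ⊥ T)) := by
      intro w hwT hwb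
      obtain ⟨d, rfl⟩ := coe_of_ne_bot hwb
      rw [subd_insert_iff]
      apply not_subset_of_missing_ne
      rw [missing_insert_coe, hmb]
      have := card_erase_ge (missing I T) d
      intro hc
      rw [hc] at this
      simp at this
      omega
    have hCC : (∑ w : VV n, if w ∉ insert (⊥ : VV n) T ∧ IsSubd I (insert w (insert ⊥ T)) then
          ∑ v ∈ (T ∩ coeIm I), (sgn (insert w T) w * sgn (insert w T) v) •
            deltaCh (insert ⊥ ((insert w T).erase v)) else 0)
        = (∑ w : VV n, if w ∉ T ∧ w ≠ ⊥ then
            ∑ v ∈ (T ∩ coeIm I), (sgn (insert w T) w * sgn (insert w T) v) •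
              deltaCh (insert ⊥ ((insert w T).erase v)) else 0) := by
      refine Finset.sum_congr rfl fun w _ => ?_
      refine if_congr ?_ rfl rfl
      constructor
      · rintro ⟨h1, _⟩
        exact ⟨fun hc => h1 (Finset.mem_insert_of_mem hc),
          fun hc => h1 (hc ▸ Finset.mem_insert_self _ _)⟩
      · rintro ⟨h1, h2⟩
        refine ⟨by
          simp only [Finset.mem_insert, not_or]
          exact ⟨h2, h1⟩, hsubd_all w h1 h2⟩
    have hDiag2 : (∑ w : VV n,
        if (w ∉ insert (⊥ : VV n) T ∧ IsSubd I (insert w (insert ⊥ T))) ∧ w ∈ coeIm I then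
          deltaCh (insert ⊥ T) else 0)
        = ((coeIm I \ T).card) • deltaCh (insert ⊥ T) := by
      have hptw : ∀ w : VV n,
          (if (w ∉ insert (⊥ : VV n) T ∧ IsSubd I (insert w (insert ⊥ T))) ∧ w ∈ coeIm I then
            deltaCh (insert ⊥ T) else 0)
          = (if w ∉ T ∧ w ≠ ⊥ ∧ w ∈ coeIm I then deltaCh (insert ⊥ T) else 0) := by
        intro w
        refine if_congr ?_ rfl rfl
        constructor
        · rintro ⟨⟨h1, _⟩, h3⟩
          exact ⟨fun hc => h1 (Finset.mem_insert_of_mem hc),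
            fun hc => h1 (hc ▸ Finset.mem_insert_self _ _), h3⟩
        · rintro ⟨h1, h2, h3⟩
          exact ⟨⟨by
            simp only [Finset.mem_insert, not_or]
            exact ⟨h2, h1⟩, hsubd_all w h1 h2⟩, h3⟩
      rw [Finset.sum_congr rfl (fun w _ => hptw w), ← Finset.sum_filter, Finset.sum_const,
        card_diag]
    have hPstar0 : pstarCo I (insert ⊥ T) = 0 := by
      apply pstar_of_card_ne hbi
      rw [hmb]
      exact hr1
    rw [hCC, hDiag2, hPstar0, liftCh_zero, sub_zero]
    rw [← Nat.cast_smul_eq_nsmul ℝ ((coeIm I \ T).card), smul_smul, neg_smul]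
    have hcoef : ((I.card : ℝ)⁻¹ * ((T ∩ coeIm I).card : ℝ))
        + ((I.card : ℝ)⁻¹ * (((coeIm I \ T).card : ℕ) : ℝ)) = 1 := by
      rw [hcardA]
      have : (((coeIm I \ T).card : ℕ) : ℝ) = ((missing I T).card : ℝ) := by
        exact_mod_cast card_sdiff_missing I T
      rw [this]
      field_simp
      ring
    calc -((I.card : ℝ)⁻¹ • (∑ w : VV n, if w ∉ T ∧ w ≠ ⊥ then
          ∑ v ∈ (T ∩ coeIm I), (sgn (insert w T) w * sgn (insert w T) v) •
            deltaCh (insert ⊥ ((insert w T).erase v)) else 0))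
        + ((I.card : ℝ)⁻¹ * ((T ∩ coeIm I).card : ℝ)) • deltaCh (insert ⊥ T)
        + (((I.card : ℝ)⁻¹ * (((coeIm I \ T).card : ℕ) : ℝ)) • deltaCh (insert ⊥ T)
          + (I.card : ℝ)⁻¹ • (∑ w : VV n, if w ∉ T ∧ w ≠ ⊥ then
            ∑ v ∈ (T ∩ coeIm I), (sgn (insert w T) w * sgn (insert w T) v) •
              deltaCh (insert ⊥ ((insert w T).erase v)) else 0))
        = (((I.card : ℝ)⁻¹ * ((T ∩ coeIm I).card : ℝ))
            + ((I.card : ℝ)⁻¹ * (((coeIm I \ T).card : ℕ) : ℝ))) • deltaCh (insert ⊥ T) := by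
          rw [add_smul]
          abel
      _ = deltaCh (insert ⊥ T) := by rw [hcoef, one_smul]

lemma stmt3 (hI : I.Nonempty) (σ : Finset (VV n)) (hσ : IsSubd I σ) :
    liftCh (dSubGen I) (astarCo I σ) + liftCh (astarCo I) (dSubGen I σ)
      = deltaCh σ - liftCh (istarCo I) (pstarCo I σ) := by
  obtain ⟨hne, hns⟩ := hσ
  by_cases hbm : (⊥ : VV n) ∈ σ
  · have hns' : ¬ coeIm I ⊆ σ.erase ⊥ := fun h => hns (h.trans (Finset.erase_subset _ _))
    rw [← Finset.insert_erase hbm]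
    exact stmt3_bot hI _ (Finset.notMem_erase _ _) hns'
  · rw [astar_of_not_bot hbm, liftCh_zero, zero_add, liftCh_dSub, pstar_of_not_bot hbm,
      liftCh_delta]
    have hpt : ∀ w : VV n,
        (if w ∉ σ ∧ IsSubd I (insert w σ) then
          sgn (insert w σ) w • astarCo I (insert w σ) else 0)
        = (if w = ⊥ then (fun _ : VV n => astarCo I (insert ⊥ σ)) w else 0) := by
      intro w
      by_cases hwb : w = ⊥
      · subst hwb
        rw [if_pos ⟨hbm, (subd_insert_iff _ _).mpr
            (fun h => hns (coeIm_subset_insert_bot.mp h))⟩, sgn_bot, one_smul, if_pos rfl]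
      · rw [if_neg hwb, astar_of_not_bot (by
          simp only [Finset.mem_insert, not_or]
          exact ⟨fun h => hwb h.symm, hbm⟩), smul_zero, ite_self]
    rw [Finset.sum_congr rfl (fun w _ => hpt w), Finset.sum_ite_eq' Finset.univ (⊥ : VV n),
      if_pos (Finset.mem_univ _), astar_of_bot (Finset.mem_insert_self _ _),
      Finset.erase_insert hbm]
    have histar : istarCo I σ = deltaCh σ + (I.card : ℝ)⁻¹ •
        ∑ v ∈ σ ∩ coeIm I, sgn σ v • deltaCh (insert ⊥ (σ.erase v)) := by
      unfold istarCo
      rw [if_pos hns]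
    rw [histar, neg_smul]
    abel

end Stellar

/-- The stellar welding maps `(i^⋆, p^⋆, a^⋆)` form a special
deformation retraction of `C^•(⋆_I Δ^n)` onto `C^•(Δ^n)`. -/
theorem stellar_welding_cochains (n : ℕ) (hn : 1 ≤ n)
    (I : Finset (Fin (n + 1))) (hI : I.Nonempty) :
    -- (1) i^⋆ and p^⋆ are cochain maps
    (∀ σ : Finset (VV n), IsDel σ →
      liftCh (dSubGen I) (istarCo I σ) = liftCh (istarCo I) (dDelGen σ))
    ∧ (∀ σ : Finset (VV n), IsSubd I σ →
      liftCh dDelGen (pstarCo I σ) = liftCh (pstarCo I) (dSubGen I σ))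
    -- (2) p^⋆ ∘ i^⋆ = id on C^•(Δ^n)
    ∧ (∀ σ : Finset (VV n), IsDel σ →
      liftCh (pstarCo I) (istarCo I σ) = deltaCh σ)
    -- (3) d a^⋆ + a^⋆ d = 1 - i^⋆ p^⋆ on C^•(⋆_I Δ^n)
    ∧ (∀ σ : Finset (VV n), IsSubd I σ →
      liftCh (dSubGen I) (astarCo I σ) + liftCh (astarCo I) (dSubGen I σ)
        = deltaCh σ - liftCh (istarCo I) (pstarCo I σ))
    -- (4) a^⋆ ∘ a^⋆ = 0
    ∧ (∀ σ : Finset (VV n), IsSubd I σ →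
      liftCh (astarCo I) (astarCo I σ) = 0)
    -- (5) a^⋆ ∘ i^⋆ = 0
    ∧ (∀ σ : Finset (VV n), IsDel σ →
      liftCh (astarCo I) (istarCo I σ) = 0)
    -- (6) p^⋆ ∘ a^⋆ = 0
    ∧ (∀ σ : Finset (VV n), IsSubd I σ →
      liftCh (pstarCo I) (astarCo I σ) = 0) := by
  exact ⟨fun σ h => Stellar.stmt1a hI σ h, fun σ h => Stellar.stmt1b σ h,
    fun σ h => Stellar.stmt2 hI σ h, fun σ h => Stellar.stmt3 hI σ h,
    fun σ h => Stellar.stmt4 σ h, fun σ h => Stellar.stmt5 σ h,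
    fun σ h => Stellar.stmt6 σ h⟩

end
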